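/- For every δ > 0 there exists a constant C₂(δ) > 0 such that for all t ≥ 0: ∫_0^t e^{−δs} / ( √(t−s) (1 + √(t−s)) ) ds ≤ C₂(δ)/(1+t). -/

import Mathlib

open Real MeasureTheory intervalIntegral

private lemma aux_inv_denom {u : ℝ} (hu : 0 ≤ u) :
    (Real.sqrt u * (1 + Real.sqrt u))⁻¹ ≤ u ^ (-(1/2) : ℝ) := by
  rcases eq_or_lt_of_le hu with h | h
  · rw [← h]; simp
  · have hs : 0 < Real.sqrt u := Real.sqrt_pos.2 h
    have h1 : u ^ (-(1/2) : ℝ) = (Real.sqrt u)⁻¹ := by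
      rw [Real.rpow_neg hu, ← Real.sqrt_eq_rpow]
    rw [h1]
    exact inv_anti₀ hs (le_mul_of_one_le_right hs.le (by linarith [Real.sqrt_nonneg u]))

private lemma aux_x_exp (x : ℝ) : x * Real.exp (-x) ≤ 1 := by
  have h1 : x ≤ Real.exp x := by linarith [Real.add_one_le_exp x]
  rw [Real.exp_neg]
  calc x * (Real.exp x)⁻¹ ≤ Real.exp x * (Real.exp x)⁻¹ := by gcongr
    _ = 1 := mul_inv_cancel₀ (Real.exp_ne_zero x)

private lemma aux_x_exp_mul {c : ℝ} (x : ℝ) (hc : 0 < c) : x * Real.exp (-(c * x)) ≤ 1 / c := by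
  have h := aux_x_exp (c * x)
  rw [le_div_iff₀ hc]
  nlinarith [h]

private lemma aux_decay {δ t : ℝ} (hδ : 0 < δ) (ht : 0 ≤ t) :
    (1 + t) * Real.exp (-(δ * t)) ≤ 1 + 1 / δ := by
  have e2 : Real.exp (-(δ * t)) ≤ 1 := Real.exp_le_one_iff.2 (by nlinarith)
  have e3 : t * Real.exp (-(δ * t)) ≤ 1 / δ := aux_x_exp_mul t hδ
  nlinarith

/-- Convolving the heat-type decay factor `1/(√(t-s)(1+√(t-s)))` with an
exponentially decaying source produces decay like `1/(1+t)`. -/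
theorem stmt_13 (δ : ℝ) (hδ : 0 < δ) :
    ∃ C : ℝ, 0 < C ∧ ∀ t : ℝ, 0 ≤ t →
      (∫ s in (0:ℝ)..t,
        Real.exp (-δ * s) / (Real.sqrt (t - s) * (1 + Real.sqrt (t - s)))) ≤
        C / (1 + t) := by
  refine ⟨(1 + 2/δ) * (2/δ) + 2 * Real.exp δ * (1 + 1/δ), by positivity, ?_⟩
  intro t ht
  have h1t : (0:ℝ) < 1 + t := by linarith
  set g : ℝ → ℝ := fun s => Real.exp (-δ * s) / (Real.sqrt (t - s) * (1 + Real.sqrt (t - s)))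
    with hg
  set a : ℝ := max 0 (t - 1) with ha
  have ha0 : 0 ≤ a := le_max_left _ _
  have hat : a ≤ t := max_le ht (by linarith)
  have hta : t - a ≤ 1 := by linarith [le_max_right 0 (t - 1)]
  have hmeas : Measurable g := by fun_prop
  have hgnn : ∀ s, 0 ≤ g s := fun s =>
    div_nonneg (Real.exp_nonneg _)
      (mul_nonneg (Real.sqrt_nonneg _) (by linarith [Real.sqrt_nonneg (t - s)]))
  have hrpow : IntervalIntegrable (fun s => (t - s) ^ (-(1/2) : ℝ)) volume 0 t := by
    have := (intervalIntegrable_rpow' (a := t) (b := 0) (r := -(1/2))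
      (by norm_num)).comp_sub_left t
    simpa using this
  have hbound : ∀ s ∈ Set.Icc (0:ℝ) t,
      g s ≤ Real.exp (-δ * s) * (t - s) ^ (-(1/2) : ℝ) := by
    intro s hs
    have hu : 0 ≤ t - s := by linarith [hs.2]
    rw [hg]
    simp only [div_eq_mul_inv]
    exact mul_le_mul_of_nonneg_left (aux_inv_denom hu) (Real.exp_nonneg _)
  have hgint : IntervalIntegrable g volume 0 t := by
    apply hrpow.mono_fun (hmeas.aestronglyMeasurable.restrict)
    rw [Set.uIoc_of_le ht]
    filter_upwards [ae_restrict_mem measurableSet_Ioc] with s hs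
    have hu : 0 ≤ t - s := by linarith [hs.2]
    rw [Real.norm_eq_abs, Real.norm_eq_abs, abs_of_nonneg (hgnn s),
      abs_of_nonneg (Real.rpow_nonneg hu _)]
    calc g s ≤ Real.exp (-δ * s) * (t - s) ^ (-(1/2) : ℝ) := hbound s ⟨hs.1.le, hs.2⟩
      _ ≤ 1 * (t - s) ^ (-(1/2) : ℝ) := by
          apply mul_le_mul_of_nonneg_right _ (Real.rpow_nonneg hu _)
          exact Real.exp_le_one_iff.2 (by nlinarith [hs.1.le])
      _ = (t - s) ^ (-(1/2) : ℝ) := one_mul _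
  have hgint1 : IntervalIntegrable g volume 0 a := by
    apply hgint.mono_set'
    rw [Set.uIoc_of_le ha0, Set.uIoc_of_le ht]
    exact Set.Ioc_subset_Ioc_right hat
  have hgint2 : IntervalIntegrable g volume a t := by
    apply hgint.mono_set'
    rw [Set.uIoc_of_le hat, Set.uIoc_of_le ht]
    exact Set.Ioc_subset_Ioc_left ha0
  have hrpow2 : IntervalIntegrable (fun s => (t - s) ^ (-(1/2) : ℝ)) volume a t := by
    apply hrpow.mono_set'
    rw [Set.uIoc_of_le hat, Set.uIoc_of_le ht]
    exact Set.Ioc_subset_Ioc_left ha0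
  -- piece 2
  have hp2 : (∫ s in a..t, g s) ≤ (2 * Real.exp δ * (1 + 1/δ)) / (1 + t) := by
    have step1 : (∫ s in a..t, g s)
        ≤ ∫ s in a..t, (Real.exp δ * Real.exp (-(δ * t))) * (t - s) ^ (-(1/2) : ℝ) := by
      apply intervalIntegral.integral_mono_on hat hgint2 (hrpow2.const_mul _)
      intro s hs
      have hu : 0 ≤ t - s := by linarith [hs.2]
      calc g s ≤ Real.exp (-δ * s) * (t - s) ^ (-(1/2) : ℝ) :=
            hbound s ⟨le_trans ha0 hs.1, hs.2⟩
        _ ≤ (Real.exp δ * Real.exp (-(δ * t))) * (t - s) ^ (-(1/2) : ℝ) := by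
            apply mul_le_mul_of_nonneg_right _ (Real.rpow_nonneg hu _)
            rw [← Real.exp_add]
            apply Real.exp_le_exp.2
            have h2 : t - 1 ≤ a := le_max_right _ _
            have h3 : δ * (t - 1) ≤ δ * s :=
              mul_le_mul_of_nonneg_left (by linarith [hs.1]) hδ.le
            nlinarith [h3]
    have step2 : (∫ s in a..t, (Real.exp δ * Real.exp (-(δ * t))) * (t - s) ^ (-(1/2) : ℝ))
        = (Real.exp δ * Real.exp (-(δ * t))) * (2 * (t - a) ^ ((1/2) : ℝ)) := by
      rw [intervalIntegral.integral_const_mul]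
      congr 1
      rw [intervalIntegral.integral_comp_sub_left (fun x => x ^ (-(1/2) : ℝ)) t, sub_self]
      rw [integral_rpow (Or.inl (by norm_num)), Real.zero_rpow (by norm_num)]
      ring_nf
    have step3 : (t - a) ^ ((1/2) : ℝ) ≤ 1 :=
      Real.rpow_le_one (by linarith) hta (by norm_num)
    have hd := aux_decay hδ ht
    have hfinal : (Real.exp δ * Real.exp (-(δ * t))) * (2 * (t - a) ^ ((1/2) : ℝ))
        ≤ (2 * Real.exp δ * (1 + 1/δ)) / (1 + t) := by
      rw [le_div_iff₀ h1t]
      have hE : 0 < Real.exp δ := Real.exp_pos δ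
      have hE2 : 0 < Real.exp (-(δ * t)) := Real.exp_pos _
      have hrnn : 0 ≤ (t - a) ^ ((1/2) : ℝ) := Real.rpow_nonneg (by linarith) _
      nlinarith [mul_le_mul_of_nonneg_left hd (by positivity : (0:ℝ) ≤ 2 * Real.exp δ),
        mul_le_mul_of_nonneg_left step3 (by positivity : (0:ℝ) ≤ 2 * Real.exp δ * Real.exp (-(δ * t)) * (1 + t)),
        mul_pos hE hE2]
    calc (∫ s in a..t, g s) ≤ _ := step1
      _ = _ := step2
      _ ≤ _ := hfinal
  -- piece 1
  have hp1 : (∫ s in (0:ℝ)..a, g s) ≤ ((1 + 2/δ) * (2/δ)) / (1 + t) := by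
    rcases eq_or_lt_of_le ha0 with h | h
    · rw [← h, intervalIntegral.integral_same]
      positivity
    · have hx : a ≤ t - 1 := by
        rcases le_or_gt (t - 1) 0 with h' | h'
        · exfalso
          have : a = 0 := by rw [ha]; exact max_eq_left h'
          rw [this] at h; exact lt_irrefl _ h
        · rw [ha]; exact max_le h'.le le_rfl
      have hkey : ∀ s ∈ Set.Icc (0:ℝ) a,
          g s ≤ ((1 + 2/δ) * Real.exp (-(δ/2) * s)) / (1 + t) := by
        intro s hs
        obtain ⟨hs0, hsa⟩ := hs
        have hu1 : 1 ≤ t - s := by linarith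
        have hu0 : (0:ℝ) ≤ t - s := by linarith
        have hsq : 1 ≤ Real.sqrt (t - s) := by
          rw [show (1:ℝ) = Real.sqrt 1 by simp]
          exact Real.sqrt_le_sqrt hu1
        have hss : Real.sqrt (t - s) * Real.sqrt (t - s) = t - s := Real.mul_self_sqrt hu0
        have hD0 : 0 < Real.sqrt (t - s) * (1 + Real.sqrt (t - s)) := by nlinarith
        rw [hg]
        simp only []
        rw [div_le_div_iff₀ hD0 h1t]
        have hmul : (1 + t) ≤ (Real.sqrt (t - s) * (1 + Real.sqrt (t - s))) * (1 + s) := by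
          nlinarith
        have hexp : Real.exp (-δ * s) * (1 + s) ≤ (1 + 2/δ) * Real.exp (-(δ/2) * s) := by
          have e1 : Real.exp (-δ * s) = Real.exp (-(δ/2) * s) * Real.exp (-(δ/2) * s) := by
            rw [← Real.exp_add]; ring_nf
          have e2 : Real.exp (-(δ/2) * s) ≤ 1 := Real.exp_le_one_iff.2 (by nlinarith)
          have e3 : s * Real.exp (-(δ/2) * s) ≤ 2/δ := by
            have h4 := aux_x_exp_mul (c := δ/2) s (by linarith)
            rw [show -(δ/2 * s) = -(δ/2) * s by ring] at h4
            rw [show (1:ℝ) / (δ/2) = 2/δ by field_simp] at h4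
            exact h4
          calc Real.exp (-δ * s) * (1 + s)
              = (Real.exp (-(δ/2) * s) + s * Real.exp (-(δ/2) * s)) * Real.exp (-(δ/2) * s) := by
                rw [e1]; ring
            _ ≤ (1 + 2/δ) * Real.exp (-(δ/2) * s) := by
                apply mul_le_mul_of_nonneg_right _ (Real.exp_nonneg _)
                linarith
        calc Real.exp (-δ * s) * (1 + t)
            ≤ Real.exp (-δ * s) * ((Real.sqrt (t - s) * (1 + Real.sqrt (t - s))) * (1 + s)) :=
              mul_le_mul_of_nonneg_left hmul (Real.exp_nonneg _)
          _ = (Real.exp (-δ * s) * (1 + s)) * (Real.sqrt (t - s) * (1 + Real.sqrt (t - s))) := by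
              ring
          _ ≤ ((1 + 2/δ) * Real.exp (-(δ/2) * s)) * (Real.sqrt (t - s) * (1 + Real.sqrt (t - s))) :=
              mul_le_mul_of_nonneg_right hexp hD0.le
          _ = (1 + 2/δ) * Real.exp (-(δ/2) * s) * (Real.sqrt (t - s) * (1 + Real.sqrt (t - s))) := rfl
      have hcont : Continuous (fun s : ℝ => ((1 + 2/δ) * Real.exp (-(δ/2) * s)) / (1 + t)) := by
        fun_prop
      have hmono := intervalIntegral.integral_mono_on ha0 hgint1
        (hcont.intervalIntegrable 0 a) hkey
      have hexpint : (∫ s in (0:ℝ)..a, Real.exp (-(δ/2) * s)) ≤ 2/δ := by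
        have hc : (-(δ/2) : ℝ) ≠ 0 := by
          simp only [ne_eq, neg_eq_zero]
          positivity
        rw [intervalIntegral.integral_comp_mul_left (fun x => Real.exp x) hc,
          integral_exp, smul_eq_mul, mul_zero, Real.exp_zero]
        have hinv : (-(δ/2) : ℝ)⁻¹ = -(2/δ) := by
          rw [inv_neg, inv_div]
        rw [hinv]
        have hE : 0 < Real.exp (-(δ/2) * a) := Real.exp_pos _
        have h2δ : (0:ℝ) < 2/δ := by positivity
        nlinarith [mul_pos h2δ hE]
      calc (∫ s in (0:ℝ)..a, g s)
          ≤ ∫ s in (0:ℝ)..a, ((1 + 2/δ) * Real.exp (-(δ/2) * s)) / (1 + t) := hmono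
        _ = ((1 + 2/δ) / (1 + t)) * ∫ s in (0:ℝ)..a, Real.exp (-(δ/2) * s) := by
            rw [← intervalIntegral.integral_const_mul]
            apply intervalIntegral.integral_congr
            intro s _
            ring
        _ ≤ ((1 + 2/δ) / (1 + t)) * (2/δ) := by
            apply mul_le_mul_of_nonneg_left hexpint (by positivity)
        _ = ((1 + 2/δ) * (2/δ)) / (1 + t) := by ring
  calc (∫ s in (0:ℝ)..t, g s)
      = (∫ s in (0:ℝ)..a, g s) + ∫ s in a..t, g s :=
        (intervalIntegral.integral_add_adjacent_intervals hgint1 hgint2).symm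
    _ ≤ ((1 + 2/δ) * (2/δ)) / (1 + t) + (2 * Real.exp δ * (1 + 1/δ)) / (1 + t) :=
        add_le_add hp1 hp2
    _ = ((1 + 2/δ) * (2/δ) + 2 * Real.exp δ * (1 + 1/δ)) / (1 + t) := by
        rw [← add_div]
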